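/- arXiv:0712.0837 — 5 statements merged into one kernel-verified Lean document; each statement's English description precedes it below -/
import Mathlib

section
/- For all positive integers k and m, Σ_{i=1}^{k−1} (−1)^{k−1−i} Σ_{d ∣ m} α_i(d) = α_k(m) + (−1)^k α_1(m), where the inner sum runs over all positive divisors d of m. -/
open Finset

/-- `alpha k m` is the number of `k`-tuples `(m₁, …, m_k)` of integers, each `≥ 2`,
whose product is `m`. -/
noncomputable def alpha (k m : ℕ) : ℕ :=
  Nat.card {f : Fin k → ℕ // (∀ i, 2 ≤ f i) ∧ ∏ i, f i = m}

def P (k m : ℕ) : Finset (Fin k → ℕ) :=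
  (Fintype.piFinset fun _ => Finset.Icc 2 m).filter (fun f => ∏ i, f i = m)

lemma mem_P {k m : ℕ} (hm : 0 < m) {f : Fin k → ℕ} :
    f ∈ P k m ↔ (∀ i, 2 ≤ f i) ∧ ∏ i, f i = m := by
  simp only [P, mem_filter, Fintype.mem_piFinset, mem_Icc]
  constructor
  · rintro ⟨h1, h2⟩; exact ⟨fun i => (h1 i).1, h2⟩
  · rintro ⟨h1, h2⟩
    refine ⟨fun i => ⟨h1 i, ?_⟩, h2⟩
    exact Nat.le_of_dvd hm (h2 ▸ Finset.dvd_prod_of_mem f (mem_univ i))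

lemma alpha_eq {k m : ℕ} (hm : 0 < m) : alpha k m = (P k m).card := by
  rw [alpha, ← Nat.card_eq_finsetCard]
  exact Nat.card_congr (Equiv.subtypeEquivRight fun f => (mem_P hm).symm)

lemma key {m : ℕ} (hm : 0 < m) (i : ℕ) :
    ∑ d ∈ m.divisors, (P i d).card = (P (i+1) m).card + (P i m).card := by
  classical
  set Q : Finset (Fin i → ℕ) :=
    (Fintype.piFinset fun _ => Finset.Icc 2 m).filter (fun g => ∏ j, g j ∣ m) with hQ
  clear_value Q
  have hfiber : ∀ d ∈ m.divisors, Q.filter (fun g => ∏ j, g j = d) = P i d := by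
    intro d hd
    obtain ⟨hdvd, hm0⟩ := Nat.mem_divisors.mp hd
    have hd0 : 0 < d := Nat.pos_of_dvd_of_pos hdvd hm
    ext g
    rw [mem_P hd0]
    simp only [hQ, mem_filter, Fintype.mem_piFinset, mem_Icc]
    constructor
    · rintro ⟨⟨h1, -⟩, h2⟩; exact ⟨fun j => (h1 j).1, h2⟩
    · rintro ⟨h1, h2⟩
      refine ⟨⟨fun j => ⟨h1 j, ?_⟩, h2 ▸ hdvd⟩, h2⟩
      exact Nat.le_of_dvd hm ((h2 ▸ Finset.dvd_prod_of_mem g (mem_univ j)).trans hdvd)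
  have step1 : Q.card = ∑ d ∈ m.divisors, (P i d).card := by
    have h0 := Finset.card_eq_sum_card_fiberwise (s := Q) (t := m.divisors)
      (f := fun g : Fin i → ℕ => ∏ j, g j)
      (fun g hg => Nat.mem_divisors.mpr ⟨(mem_filter.mp (hQ ▸ hg : g ∈ _)).2, hm.ne'⟩)
    rw [h0]
    exact Finset.sum_congr rfl fun d hd => by rw [hfiber d hd]
  have step2 : (Q.filter (fun g => ¬ ∏ j, g j = m)).card = (P (i+1) m).card := by
    refine Finset.card_bij
      (fun g _ => (Fin.snoc g (m / ∏ j, g j) : Fin (i+1) → ℕ)) ?_ ?_ ?_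
    · intro g hg
      simp only [mem_filter, hQ, Fintype.mem_piFinset, mem_Icc] at hg
      obtain ⟨⟨h1, hdvd⟩, hne⟩ := hg
      have hp0 : 0 < ∏ j, g j := Nat.pos_of_dvd_of_pos hdvd hm
      have hqm : (∏ j, g j) * (m / ∏ j, g j) = m := Nat.mul_div_cancel' hdvd
      have hq2 : 2 ≤ m / ∏ j, g j := by
        by_contra h
        push_neg at h
        interval_cases h0 : (m / ∏ j, g j)
        · rw [mul_zero] at hqm; omega
        · rw [mul_one] at hqm; exact hne hqm
      rw [mem_P hm]
      constructor
      · intro j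
        refine Fin.lastCases ?_ ?_ j
        · simp only [Fin.snoc_last]; exact hq2
        · intro j'; simp only [Fin.snoc_castSucc]; exact (h1 j').1
      · rw [Fin.prod_snoc, Nat.mul_div_cancel' hdvd]
    · intro g1 h1 g2 h2 heq
      funext j
      have := congrFun heq j.castSucc
      simpa only [Fin.snoc_castSucc] using this
    · intro f hf
      rw [mem_P hm] at hf
      obtain ⟨h2, hprod⟩ := hf
      have hsplit : (∏ j : Fin i, Fin.init f j) * f (Fin.last i) = m := by
        rw [← hprod, Fin.prod_univ_castSucc]; rfl
      have hdvd : (∏ j : Fin i, Fin.init f j) ∣ m := ⟨f (Fin.last i), hsplit.symm⟩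
      have hp0 : 0 < ∏ j : Fin i, Fin.init f j := Nat.pos_of_dvd_of_pos hdvd hm
      refine ⟨Fin.init f, ?_, ?_⟩
      · simp only [mem_filter, hQ, Fintype.mem_piFinset, mem_Icc]
        refine ⟨⟨fun j => ⟨h2 _, Nat.le_of_dvd hm ?_⟩, hdvd⟩, fun heq => ?_⟩
        · exact (Finset.dvd_prod_of_mem (Fin.init f) (mem_univ j)).trans hdvd
        · rw [heq] at hsplit
          have := h2 (Fin.last i)
          nlinarith
      · have hlast : m / (∏ j : Fin i, Fin.init f j) = f (Fin.last i) := by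
          rw [← hsplit, Nat.mul_div_cancel_left _ hp0]
        funext j
        refine Fin.lastCases ?_ ?_ j
        · simp only [Fin.snoc_last]; exact hlast
        · intro j'; simp only [Fin.snoc_castSucc, Fin.init]
  have step3 : Q.card = (P (i+1) m).card + (P i m).card := by
    have h3 : (Q.filter (fun g => ∏ j, g j = m)).card
        + (Q.filter (fun g => ¬ ∏ j, g j = m)).card = Q.card :=
      Finset.card_filter_add_card_filter_not _
    rw [hfiber m (Nat.mem_divisors_self m hm.ne'), step2] at h3
    linarith
  linarith

lemma key_alpha {m : ℕ} (hm : 0 < m) (i : ℕ) :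
    ∑ d ∈ m.divisors, (alpha i d : ℤ) = (alpha (i+1) m : ℤ) + (alpha i m : ℤ) := by
  have h := key hm i
  have h1 : ∑ d ∈ m.divisors, (alpha i d : ℤ)
      = ((∑ d ∈ m.divisors, (P i d).card : ℕ) : ℤ) := by
    push_cast
    exact Finset.sum_congr rfl fun d hd => by
      rw [alpha_eq (Nat.pos_of_mem_divisors hd)]
  rw [h1, h, alpha_eq hm (k := i+1), alpha_eq hm (k := i)]
  push_cast; ring

theorem stmt4 (k m : ℕ) (hk : 0 < k) (hm : 0 < m) :
    ∑ i ∈ Finset.Ico 1 k, (-1 : ℤ) ^ (k - 1 - i) * ∑ d ∈ m.divisors, (alpha i d : ℤ)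
      = (alpha k m : ℤ) + (-1 : ℤ) ^ k * (alpha 1 m : ℤ) := by
  induction k, hk using Nat.le_induction with
  | base => simp
  | succ k hk ih =>
    rw [Finset.sum_Ico_succ_top (by omega : 1 ≤ k)]
    have hsum : ∑ i ∈ Finset.Ico 1 k,
        (-1:ℤ)^(k+1-1-i) * ∑ d ∈ m.divisors, (alpha i d:ℤ)
        = -∑ i ∈ Finset.Ico 1 k,
            (-1:ℤ)^(k-1-i) * ∑ d ∈ m.divisors, (alpha i d:ℤ) := by
      rw [← Finset.sum_neg_distrib]
      refine Finset.sum_congr rfl fun i hi => ?_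
      have hik : i < k := (Finset.mem_Ico.mp hi).2
      have he : k + 1 - 1 - i = (k - 1 - i) + 1 := by omega
      rw [he, pow_succ]; ring
    rw [hsum, ih]
    have hterm : k + 1 - 1 - k = 0 := by omega
    rw [hterm, key_alpha hm k, pow_zero]
    have hk1 : (-1:ℤ)^(k+1) = -(-1:ℤ)^k := by rw [pow_succ]; ring
    rw [hk1]; ring
end

section
/- There exists a real constant c with 1 < c < 2 such that α_k(m) ≤ m^c for all positive integers k and m. More precisely, this holds for any real c with Σ_{n=2}^∞ n^{-c} ≤ 1 (e.g. the real c ∈ (1,2) with ζ(c) = 2). -/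
open Finset Filter Topology

lemma alpha_finite {k m : ℕ} (hm : 0 < m) :
    Finite {f : Fin k → ℕ // (∀ i, 2 ≤ f i) ∧ ∏ i, f i = m} := by
  apply Finite.of_injective (fun p : {f : Fin k → ℕ // (∀ i, 2 ≤ f i) ∧ ∏ i, f i = m} =>
    (fun i => (⟨p.1 i, by
      have hd : p.1 i ∣ m := by
        have h2 := Finset.dvd_prod_of_mem p.1 (Finset.mem_univ i)
        rwa [p.2.2] at h2
      exact Nat.lt_succ_of_le (Nat.le_of_dvd hm hd)⟩ : Fin (m+1)) : Fin k → Fin (m+1)))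
  intro p q h
  apply Subtype.ext
  funext i
  have := congrFun h i
  simpa using congrArg Fin.val this

lemma nat_card_sigma {ι : Type*} [Fintype ι] {F : ι → Type*} [∀ i, Finite (F i)] :
    Nat.card (Σ i, F i) = ∑ i, Nat.card (F i) := by
  letI : ∀ i, Fintype (F i) := fun i => Fintype.ofFinite _
  simp [Nat.card_eq_fintype_card, Fintype.card_sigma]

lemma alpha_succ_le (k m : ℕ) (hm : 0 < m) :
    alpha (k+1) m ≤ ∑ d ∈ m.divisors.filter (fun d => 2 ≤ d), alpha k (m / d) := by
  classical
  set S := m.divisors.filter (fun d => 2 ≤ d) with hS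
  have hdivpos : ∀ d : {d // d ∈ S}, 0 < m / (d : ℕ) := by
    rintro ⟨d, hd⟩
    simp only [hS, Finset.mem_filter, Nat.mem_divisors] at hd
    obtain ⟨⟨hdvd, -⟩, h2d⟩ := hd
    have hd0 : 0 < d := by omega
    exact Nat.div_pos (Nat.le_of_dvd hm hdvd) hd0
  haveI : ∀ d : {d // d ∈ S}, Finite {f : Fin k → ℕ // (∀ i, 2 ≤ f i) ∧ ∏ i, f i = m / (d:ℕ)} :=
    fun d => alpha_finite (hdivpos d)
  set T := fun n : ℕ => {f : Fin k → ℕ // (∀ i, 2 ≤ f i) ∧ ∏ i, f i = n} with hT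
  have key : alpha (k+1) m ≤ Nat.card (Σ d : {d // d ∈ S}, T (m / (d:ℕ))) := by
    have hF : ∀ p : {f : Fin (k+1) → ℕ // (∀ i, 2 ≤ f i) ∧ ∏ i, f i = m},
        p.1 0 ∈ S ∧ ((∀ i, 2 ≤ Fin.tail p.1 i) ∧ ∏ i, Fin.tail p.1 i = m / p.1 0) := by
      rintro ⟨f, hf2, hfp⟩
      dsimp only
      have hdvd : f 0 ∣ m := by
        have h2 := Finset.dvd_prod_of_mem f (Finset.mem_univ 0)
        rwa [hfp] at h2
      have h0 : 0 < f 0 := lt_of_lt_of_le (by norm_num) (hf2 0)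
      have hp : f 0 * ∏ i : Fin k, Fin.tail f i = m := by
        rw [← hfp, Fin.prod_univ_succ]; rfl
      refine ⟨?_, fun i => hf2 i.succ, ?_⟩
      · simp only [hS, Finset.mem_filter, Nat.mem_divisors]
        exact ⟨⟨hdvd, hm.ne'⟩, hf2 0⟩
      · conv_rhs => rw [← hp, Nat.mul_div_cancel_left _ h0]
    let F : {f : Fin (k+1) → ℕ // (∀ i, 2 ≤ f i) ∧ ∏ i, f i = m} →
        (Σ d : {d // d ∈ S}, T (m / (d:ℕ))) :=
      fun p => ⟨⟨p.1 0, (hF p).1⟩, ⟨Fin.tail p.1, (hF p).2⟩⟩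
    have hinj : Function.Injective F := by
      rintro ⟨f, hf⟩ ⟨g, hg⟩ h
      have h' := congrArg (fun x : (Σ d : {d // d ∈ S}, T (m / (d:ℕ))) =>
        (((x.1 : ℕ), (x.2.1 : Fin k → ℕ)) : ℕ × (Fin k → ℕ))) h
      simp only [Prod.mk.injEq] at h'
      apply Subtype.ext
      have hc : Fin.cons (f 0) (Fin.tail f) = Fin.cons (g 0) (Fin.tail g) := by
        have e1 : f 0 = g 0 := h'.1
        have e2 : Fin.tail f = Fin.tail g := h'.2
        rw [e1, e2]
      rwa [Fin.cons_self_tail, Fin.cons_self_tail] at hc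
    exact Nat.card_le_card_of_injective F hinj
  refine key.trans ?_
  rw [nat_card_sigma]
  rw [← Finset.sum_coe_sort S (fun d => alpha k (m / d))]
  rfl

lemma alpha_le (c : ℝ) (hs : Summable (fun n : ℕ => ((n + 2 : ℕ) : ℝ) ^ (-c)))
    (h1 : (∑' n : ℕ, ((n + 2 : ℕ) : ℝ) ^ (-c)) ≤ 1) :
    ∀ k m : ℕ, 0 < m → (alpha k m : ℝ) ≤ (m : ℝ) ^ c := by
  intro k
  induction k with
  | zero =>
    intro m hm
    rcases eq_or_lt_of_le (show 1 ≤ m from hm) with h | h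
    · have hm1 : m = 1 := h.symm
      subst hm1
      haveI : Unique {f : Fin 0 → ℕ // (∀ i, 2 ≤ f i) ∧ ∏ i, f i = 1} :=
        ⟨⟨⟨fun i => i.elim0, fun i => i.elim0, by simp⟩⟩,
          fun a => Subtype.ext (funext fun i => i.elim0)⟩
      have : alpha 0 1 = 1 := Nat.card_unique
      rw [this]
      simp
    · haveI : IsEmpty {f : Fin 0 → ℕ // (∀ i, 2 ≤ f i) ∧ ∏ i, f i = m} := by
        refine ⟨fun p => ?_⟩
        have hp := p.2.2
        simp at hp
        omega
      have : alpha 0 m = 0 := Nat.card_of_isEmpty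
      rw [this]
      exact_mod_cast Real.rpow_nonneg (by positivity) c
  | succ k ih =>
    intro m hm
    set S := m.divisors.filter (fun d => 2 ≤ d) with hS
    have hmem : ∀ d ∈ S, d ∣ m ∧ 2 ≤ d := by
      intro d hd
      simp only [hS, Finset.mem_filter, Nat.mem_divisors] at hd
      exact ⟨hd.1.1, hd.2⟩
    calc (alpha (k+1) m : ℝ)
        ≤ ∑ d ∈ S, (alpha k (m / d) : ℝ) := by
          exact_mod_cast alpha_succ_le k m hm
      _ ≤ ∑ d ∈ S, (m : ℝ) ^ c * (d : ℝ) ^ (-c) := by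
          refine Finset.sum_le_sum fun d hd => ?_
          obtain ⟨hdvd, h2d⟩ := hmem d hd
          have hd0 : 0 < d := by omega
          have hdivpos : 0 < m / d := Nat.div_pos (Nat.le_of_dvd hm hdvd) hd0
          refine (ih (m / d) hdivpos).trans ?_
          have hcast : ((m / d : ℕ) : ℝ) = (m : ℝ) / (d : ℝ) := by
            rw [Nat.cast_div hdvd (by exact_mod_cast hd0.ne')]
          rw [hcast, Real.div_rpow (by positivity) (by positivity),
            Real.rpow_neg (by positivity), div_eq_mul_inv]
      _ = (m : ℝ) ^ c * ∑ d ∈ S, (d : ℝ) ^ (-c) := by rw [Finset.mul_sum]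
      _ ≤ (m : ℝ) ^ c * 1 := by
          refine mul_le_mul_of_nonneg_left ?_ (Real.rpow_nonneg (by positivity) c)
          have himg : ∑ d ∈ S, ((d : ℕ) : ℝ) ^ (-c)
              = ∑ n ∈ S.image (· - 2), ((n + 2 : ℕ) : ℝ) ^ (-c) := by
            rw [Finset.sum_image]
            · refine Finset.sum_congr rfl fun d hd => ?_
              have h2d := (hmem d hd).2
              congr 2
              omega
            · intro x hx y hy hxy
              simp only at hxy
              have := (hmem x hx).2
              have := (hmem y hy).2
              omega
          rw [himg]
          exact le_trans (Summable.sum_le_tsum _ (fun i _ => Real.rpow_nonneg (by positivity) _) hs) h1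
      _ = (m : ℝ) ^ c := mul_one _

lemma summable_shift {c : ℝ} (hc : 1 < c) :
    Summable (fun n : ℕ => ((n + 2 : ℕ) : ℝ) ^ (-c)) :=
  (summable_nat_add_iff 2).mpr ((Real.summable_nat_rpow (p := -c)).mpr (by linarith))

open Real in
lemma tsum_two_lt_one : (∑' n : ℕ, ((n + 2 : ℕ) : ℝ) ^ (-(2:ℝ))) < 1 := by
  have h := hasSum_zeta_two
  have hsum := h.summable
  have heq : ∀ n : ℕ, ((n + 2 : ℕ) : ℝ) ^ (-(2:ℝ)) = 1 / ((n + 2 : ℕ) : ℝ) ^ 2 := by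
    intro n
    rw [Real.rpow_neg (by positivity), ← Real.rpow_natCast ((n+2:ℕ):ℝ) 2]
    norm_num
  have hshift := Summable.sum_add_tsum_nat_add (f := fun n : ℕ => (1:ℝ) / (n : ℝ) ^ 2) 2 hsum
  have hval : (∑' n : ℕ, (1:ℝ) / ((n + 2 : ℕ) : ℝ) ^ 2) = π ^ 2 / 6 - 1 := by
    rw [h.tsum_eq] at hshift
    push_cast
    rw [← hshift]
    norm_num
  calc (∑' n : ℕ, ((n + 2 : ℕ) : ℝ) ^ (-(2:ℝ)))
      = ∑' n : ℕ, (1:ℝ) / ((n + 2 : ℕ) : ℝ) ^ 2 := tsum_congr heq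
    _ = π ^ 2 / 6 - 1 := hval
    _ < 1 := by nlinarith [Real.pi_lt_d2, Real.pi_gt_three]

lemma tendsto_F :
    Tendsto (fun c : ℝ => ∑' n : ℕ, ((n + 2 : ℕ) : ℝ) ^ (-c))
      (𝓝[Set.Ioo (3/2 : ℝ) 2] 2)
      (𝓝 (∑' n : ℕ, ((n + 2 : ℕ) : ℝ) ^ (-(2:ℝ)))) := by
  apply tendsto_tsum_of_dominated_convergence
    (bound := fun n : ℕ => ((n + 2 : ℕ) : ℝ) ^ (-(3/2 : ℝ)))
  · exact summable_shift (by norm_num)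
  · intro k
    have hpos : (0 : ℝ) < ((k + 2 : ℕ) : ℝ) := by positivity
    have hcont : Continuous fun c : ℝ => ((k + 2 : ℕ) : ℝ) ^ (-c) := by
      simp only [Real.rpow_def_of_pos hpos]
      exact Real.continuous_exp.comp (continuous_const.mul continuous_neg)
    exact (hcont.tendsto 2).mono_left nhdsWithin_le_nhds
  · apply Filter.eventually_of_mem self_mem_nhdsWithin
    intro c hc k
    have h1 : (1 : ℝ) ≤ ((k + 2 : ℕ) : ℝ) := by
      have : (1:ℕ) ≤ k + 2 := by omega
      exact_mod_cast this
    rw [Real.norm_of_nonneg (Real.rpow_nonneg (by positivity) _)]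
    exact Real.rpow_le_rpow_of_exponent_le h1 (by simpa using le_of_lt hc.1)

theorem stmt5 :
    -- the bound holds for any real `c` with `∑_{n ≥ 2} n^{-c} ≤ 1`
    (∀ c : ℝ, Summable (fun n : ℕ => ((n + 2 : ℕ) : ℝ) ^ (-c)) →
      (∑' n : ℕ, ((n + 2 : ℕ) : ℝ) ^ (-c)) ≤ 1 →
      ∀ k m : ℕ, 0 < k → 0 < m → (alpha k m : ℝ) ≤ (m : ℝ) ^ c) ∧
    -- in particular there is such a `c` in the interval `(1,2)`
    (∃ c : ℝ, 1 < c ∧ c < 2 ∧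
      ∀ k m : ℕ, 0 < k → 0 < m → (alpha k m : ℝ) ≤ (m : ℝ) ^ c) := by
  constructor
  · intro c hs h1 k m _ hm
    exact alpha_le c hs h1 k m hm
  · have hev : ∀ᶠ c in 𝓝[Set.Ioo (3/2 : ℝ) 2] (2:ℝ),
        (∑' n : ℕ, ((n + 2 : ℕ) : ℝ) ^ (-c)) < 1 :=
      tendsto_F.eventually_lt_const tsum_two_lt_one
    have hmem : ∀ᶠ c in 𝓝[Set.Ioo (3/2 : ℝ) 2] (2:ℝ), c ∈ Set.Ioo (3/2 : ℝ) 2 :=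
      Filter.eventually_of_mem self_mem_nhdsWithin fun c hc => hc
    haveI : (𝓝[Set.Ioo (3/2 : ℝ) 2] (2:ℝ)).NeBot :=
      right_nhdsWithin_Ioo_neBot (by norm_num)
    obtain ⟨c, hc1, hc2⟩ := (hev.and hmem).exists
    refine ⟨c, by linarith [hc2.1], hc2.2, fun k m _ hm => ?_⟩
    exact alpha_le c (summable_shift (by linarith [hc2.1])) hc1.le k m hm
end

section
/- The matrix Z = (α(i,j))_{i,j∈ℕ⁺} satisfies: (i) α(i·m, j·m) = α(i,j) whenever m is odd; (ii) Z is upper unitriangular, i.e. α(i,j) = 0 for i > j and α(i,i) = 1 for all i; (iii) for all positive integers i and k, Σ_{j ∣ k, j < k} α(i,j) = α(2i, k), which is the entrywise form of the identity Z·D·Z^{-1} = J, where D is the divisor matrix and J has (i,j) entry 1 if j ∈ {i, 2i} and 0 otherwise. -/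
open Finset

def tupFinset (k m : ℕ) : Finset (Fin k → ℕ) :=
  (Fintype.piFinset fun _ => Finset.range (m+1)).filter fun f => (∀ i, 2 ≤ f i) ∧ ∏ i, f i = m

lemma mem_tupFinset {k m : ℕ} (f : Fin k → ℕ) :
    f ∈ tupFinset k m ↔ (∀ i, 2 ≤ f i) ∧ ∏ i, f i = m := by
  simp only [tupFinset, Finset.mem_filter, Fintype.mem_piFinset, Finset.mem_range]
  refine ⟨fun h => h.2, fun h => ⟨fun i => ?_, h⟩⟩
  have hd : f i ∣ m := h.2 ▸ Finset.dvd_prod_of_mem f (Finset.mem_univ i)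
  rcases Nat.eq_zero_or_pos m with rfl | hm
  · exact absurd (h.2 ▸ Finset.prod_pos fun j _ => lt_of_lt_of_le two_pos (h.1 j)) (by simp)
  · exact Nat.lt_succ_of_le (Nat.le_of_dvd hm hd)

lemma alpha_eq_card (k m : ℕ) : alpha k m = (tupFinset k m).card := by
  have : {f : Fin k → ℕ | (∀ i, 2 ≤ f i) ∧ ∏ i, f i = m} = ↑(tupFinset k m) := by
    ext f; simp [mem_tupFinset]
  calc alpha k m = {f : Fin k → ℕ | (∀ i, 2 ≤ f i) ∧ ∏ i, f i = m}.ncard :=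
        Nat.card_coe_set_eq _
    _ = (tupFinset k m).card := by rw [this, Set.ncard_coe_finset]

lemma alpha_zero (m : ℕ) : alpha 0 m = if m = 1 then 1 else 0 := by
  rw [alpha_eq_card]
  split_ifs with h
  · subst h
    rw [Finset.card_eq_one]
    refine ⟨fun i => i.elim0, Finset.eq_singleton_iff_unique_mem.2 ⟨?_, ?_⟩⟩
    · exact (mem_tupFinset _).2 ⟨fun i => i.elim0, by simp⟩
    · exact fun f _ => funext fun i => i.elim0
  · rw [Finset.card_eq_zero, Finset.eq_empty_iff_forall_notMem]
    intro f hf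
    have := ((mem_tupFinset f).1 hf).2
    simp only [Finset.univ_eq_empty, Finset.prod_empty] at this
    exact h this.symm

lemma alpha_succ (k m : ℕ) (hm : 0 < m) :
    alpha (k+1) m = ∑ t ∈ m.properDivisors, alpha k t := by
  rw [alpha_eq_card]
  have : ∑ t ∈ m.properDivisors, alpha k t
      = (m.properDivisors.sigma fun t => tupFinset k t).card := by
    rw [Finset.card_sigma]
    exact Finset.sum_congr rfl fun t _ => alpha_eq_card k t
  rw [this]
  refine Finset.card_bij' (fun f _ => ⟨∏ j : Fin k, f j.castSucc, fun j => f j.castSucc⟩)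
    (fun p _ => Fin.snoc p.2 (m / p.1)) ?_ ?_ ?_ ?_
  · intro f hf
    obtain ⟨h2, hp⟩ := (mem_tupFinset f).1 hf
    have hprod : (∏ j : Fin k, f j.castSucc) * f (Fin.last k) = m := by
      rw [← Fin.prod_univ_castSucc]; exact hp
    have htpos : 0 < ∏ j : Fin k, f j.castSucc :=
      Finset.prod_pos fun j _ => lt_of_lt_of_le two_pos (h2 _)
    simp only [Finset.mem_sigma, Nat.mem_properDivisors, mem_tupFinset]
    refine ⟨⟨⟨_, hprod.symm⟩, ?_⟩, fun j => h2 _, trivial⟩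
    calc (∏ j : Fin k, f j.castSucc) < (∏ j : Fin k, f j.castSucc) * 2 := by omega
      _ ≤ _ := hprod ▸ Nat.mul_le_mul_left _ (h2 _)
  · rintro ⟨t, g⟩ hp
    simp only [Finset.mem_sigma, Nat.mem_properDivisors, mem_tupFinset] at hp
    obtain ⟨⟨hdvd, hlt⟩, h2, hprod⟩ := hp
    have ht : 0 < t := Nat.pos_of_dvd_of_pos hdvd hm
    have hmt : 2 ≤ m / t := by
      rcases Nat.lt_or_ge (m/t) 2 with h | h
      · exfalso
        have := Nat.div_mul_cancel hdvd
        interval_cases h' : m / t <;> omega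
      · exact h
    rw [mem_tupFinset]
    constructor
    · intro j
      induction j using Fin.lastCases with
      | last => simpa using hmt
      | cast j => simpa using h2 j
    · rw [Fin.prod_univ_castSucc]
      simp [hprod, Nat.mul_div_cancel' hdvd]
  · intro f hf
    obtain ⟨h2, hp⟩ := (mem_tupFinset f).1 hf
    have hprod : (∏ j : Fin k, f j.castSucc) * f (Fin.last k) = m := by
      rw [← Fin.prod_univ_castSucc]; exact hp
    have htpos : 0 < ∏ j : Fin k, f j.castSucc :=
      Finset.prod_pos fun j _ => lt_of_lt_of_le two_pos (h2 _)
    have hdiv : m / (∏ j : Fin k, f j.castSucc) = f (Fin.last k) := by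
      rw [← hprod, Nat.mul_div_cancel_left _ htpos]
    funext x
    induction x using Fin.lastCases with
    | last => simp [hdiv]
    | cast j => simp
  · rintro ⟨t, g⟩ hp
    simp only [Finset.mem_sigma, Nat.mem_properDivisors, mem_tupFinset] at hp
    obtain ⟨⟨hdvd, hlt⟩, h2, hprod⟩ := hp
    refine Sigma.ext ?_ (heq_of_eq ?_)
    · simpa using hprod
    · funext j; simp

lemma alpha_eq_zero_of_lt {k m : ℕ} (h : m < 2 ^ k) : alpha k m = 0 := by
  rw [alpha_eq_card, Finset.card_eq_zero, Finset.eq_empty_iff_forall_notMem]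
  intro f hf
  obtain ⟨h2, hp⟩ := (mem_tupFinset f).1 hf
  have : (2:ℕ) ^ k ≤ m := by
    calc (2:ℕ) ^ k = ∏ _i : Fin k, 2 := by simp
      _ ≤ ∏ i, f i := Finset.prod_le_prod' fun i _ => h2 i
      _ = m := hp
  omega

lemma two_mul_le_of_properDivisor {t m : ℕ} (hm : 0 < m) (ht : t ∈ m.properDivisors) :
    2 * t ≤ m := by
  obtain ⟨hdvd, hlt⟩ := Nat.mem_properDivisors.1 ht
  obtain ⟨s, rfl⟩ := hdvd
  have ht0 : 0 < t := by rcases Nat.eq_zero_or_pos t with rfl|h; · simp at hm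
                         · exact h
  have hs : 2 ≤ s := (Nat.lt_mul_iff_one_lt_right ht0).1 hlt
  nlinarith

lemma alpha_pow (k : ℕ) : alpha k (2 ^ k) = 1 := by
  induction k with
  | zero => simp [alpha_zero]
  | succ k ih =>
    rw [alpha_succ _ _ (by positivity)]
    rw [Finset.sum_eq_single (2 ^ k)]
    · exact ih
    · intro t ht hne
      refine alpha_eq_zero_of_lt ?_
      have h2 := two_mul_le_of_properDivisor (by positivity) ht
      rcases Nat.lt_or_ge t (2^k) with h | h
      · exact h
      · exfalso; apply hne; have : t ≤ 2 ^ k := by rw [pow_succ] at h2; omega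
        omega
    · intro h
      exfalso; apply h
      exact Nat.mem_properDivisors.2 ⟨⟨2, by ring⟩, by have := Nat.one_le_two_pow (n := k); omega⟩

/-- The `(i,j)` entry `α(i,j)` of the matrix `Z`: writing `i = 2^k · d` with `d` odd
(`k = v₂(i)`), the `i`-th row of `Z` is the `d`-th row of `(D - I)^k`; explicitly
`α(i,j) = α_k(j/d)` if `d ∣ j` (and `k ≥ 1`), `α(i,j) = δ_{i,j}` if `i` is odd. -/
noncomputable def alphaEnt (i j : ℕ) : ℕ :=
  if i.factorization 2 = 0 then (if i = j then 1 else 0)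
  else if (i / 2 ^ (i.factorization 2)) ∣ j then
    alpha (i.factorization 2) (j / (i / 2 ^ (i.factorization 2)))
  else 0

lemma alphaEnt_eq (i j : ℕ) (hj : 0 < j) :
    alphaEnt i j = if (i / 2 ^ (i.factorization 2)) ∣ j then
      alpha (i.factorization 2) (j / (i / 2 ^ (i.factorization 2))) else 0 := by
  unfold alphaEnt
  by_cases hv : i.factorization 2 = 0
  · rw [if_pos hv, hv]
    simp only [pow_zero, Nat.div_one, alpha_zero]
    by_cases hij : i = j
    · subst hij
      rw [if_pos rfl, if_pos (dvd_refl i), Nat.div_self hj, if_pos rfl]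
    · rw [if_neg hij]
      by_cases hd : i ∣ j
      · rw [if_pos hd, if_neg]
        intro h1
        apply hij
        have := Nat.div_mul_cancel hd
        rw [h1, one_mul] at this
        omega
      · rw [if_neg hd]
  · rw [if_neg hv]

lemma odd_part_pos {i : ℕ} (hi : 0 < i) : 0 < i / 2 ^ (i.factorization 2) :=
  Nat.ordCompl_pos 2 hi.ne'

lemma pow_mul_odd_part (i : ℕ) : 2 ^ (i.factorization 2) * (i / 2 ^ (i.factorization 2)) = i :=
  Nat.ordProj_mul_ordCompl_eq_self i 2

lemma fact_two_mul {i : ℕ} (hi : 0 < i) : (2*i).factorization 2 = i.factorization 2 + 1 := by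
  rw [Nat.factorization_mul two_ne_zero hi.ne', Finsupp.add_apply,
    Nat.Prime.factorization_self Nat.prime_two, add_comm]

lemma odd_part_two_mul {i : ℕ} (hi : 0 < i) :
    (2*i) / 2 ^ ((2*i).factorization 2) = i / 2 ^ (i.factorization 2) := by
  rw [fact_two_mul hi, pow_succ', ← Nat.mul_div_mul_left i (2 ^ (i.factorization 2)) two_pos]

theorem stmt6 :
    -- (i) `α(im, jm) = α(i,j)` for `m` odd
    (∀ i j m : ℕ, 0 < i → 0 < j → Odd m → alphaEnt (i * m) (j * m) = alphaEnt i j) ∧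
    -- (ii) `Z` is upper unitriangular
    (∀ i j : ℕ, 0 < i → 0 < j → j < i → alphaEnt i j = 0) ∧
    (∀ i : ℕ, 0 < i → alphaEnt i i = 1) ∧
    -- (iii) entrywise form of `Z · D · Z⁻¹ = J`
    (∀ i k : ℕ, 0 < i → 0 < k →
      ∑ j ∈ k.properDivisors, alphaEnt i j = alphaEnt (2 * i) k) := by
  refine ⟨?_, ?_, ?_, ?_⟩
  · -- part (i)
    intro i j m hi hj hm
    have hm0 : 0 < m := hm.pos
    have hnd : ¬ (2 ∣ m) := by
      rw [Nat.odd_iff] at hm; omega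
    have hfact : (i*m).factorization 2 = i.factorization 2 := by
      rw [Nat.factorization_mul hi.ne' hm0.ne', Finsupp.add_apply,
        Nat.factorization_eq_zero_of_not_dvd hnd, add_zero]
    have hd : (i*m) / 2 ^ ((i*m).factorization 2) = (i / 2 ^ (i.factorization 2)) * m := by
      rw [hfact, mul_comm i m, Nat.mul_div_assoc m (Nat.ordProj_dvd i 2), mul_comm]
    rw [alphaEnt_eq _ _ (by positivity), alphaEnt_eq _ _ hj, hd, hfact]
    simp only [Nat.mul_dvd_mul_iff_right hm0, Nat.mul_div_mul_right _ _ hm0]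
  · -- part (ii) off-diagonal
    intro i j hi hj hlt
    rw [alphaEnt_eq _ _ hj]
    split_ifs with hdvd
    · apply alpha_eq_zero_of_lt
      rw [Nat.div_lt_iff_lt_mul (odd_part_pos hi), pow_mul_odd_part]
      exact hlt
    · rfl
  · -- part (ii) diagonal
    intro i hi
    rw [alphaEnt_eq _ _ hi, if_pos (Nat.ordCompl_dvd i 2)]
    rw [Nat.div_div_self (Nat.ordProj_dvd i 2) hi.ne', alpha_pow]
  · -- part (iii)
    intro i k hi hk
    set v := i.factorization 2 with hv
    set d := i / 2 ^ v with hdd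
    have hd0 : 0 < d := odd_part_pos hi
    have hRHS : alphaEnt (2*i) k = if d ∣ k then alpha (v+1) (k/d) else 0 := by
      rw [alphaEnt_eq _ _ hk, odd_part_two_mul hi, fact_two_mul hi]
    rw [hRHS]
    have hLHS : ∑ j ∈ k.properDivisors, alphaEnt i j
        = ∑ j ∈ k.properDivisors.filter (d ∣ ·), alpha v (j/d) := by
      rw [Finset.sum_filter]
      exact Finset.sum_congr rfl fun j hj =>
        alphaEnt_eq i j (Nat.pos_of_mem_properDivisors hj)
    rw [hLHS]
    by_cases hdk : d ∣ k
    · rw [if_pos hdk, alpha_succ v (k/d) (Nat.div_pos (Nat.le_of_dvd hk hdk) hd0)]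
      obtain ⟨b, hb⟩ := hdk
      refine Finset.sum_bij' (fun j _ => j / d) (fun t _ => d * t) ?_ ?_ ?_ ?_ ?_
      · intro j hjm
        obtain ⟨hjp, hjd⟩ := Finset.mem_filter.1 hjm
        obtain ⟨hjk, hjlt⟩ := Nat.mem_properDivisors.1 hjp
        obtain ⟨a, rfl⟩ := hjd
        rw [hb] at hjk hjlt
        show d * a / d ∈ (k / d).properDivisors
        rw [Nat.mul_div_cancel_left a hd0, hb, Nat.mul_div_cancel_left b hd0]
        exact Nat.mem_properDivisors.2 ⟨(mul_dvd_mul_iff_left hd0.ne').1 hjk,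
          lt_of_mul_lt_mul_left hjlt (Nat.zero_le d)⟩
      · intro t htm
        obtain ⟨htk, htlt⟩ := Nat.mem_properDivisors.1 htm
        show d * t ∈ k.properDivisors.filter (d ∣ ·)
        have h1 : d * t ∣ k := by
          have := mul_dvd_mul_left d htk
          rwa [Nat.mul_div_cancel' ⟨b, hb⟩] at this
        have h2 : d * t < k := by
          have := mul_lt_mul_of_pos_left htlt hd0
          rwa [Nat.mul_div_cancel' ⟨b, hb⟩] at this
        exact Finset.mem_filter.2 ⟨Nat.mem_properDivisors.2 ⟨h1, h2⟩, Dvd.intro t rfl⟩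
      · intro j hjm
        exact Nat.mul_div_cancel' (Finset.mem_filter.1 hjm).2
      · intro t _
        exact Nat.mul_div_cancel_left _ hd0
      · intro j _
        rfl
    · rw [if_neg hdk]
      convert Finset.sum_empty
      rw [Finset.eq_empty_iff_forall_notMem]
      intro j hjm
      obtain ⟨hjp, hjd⟩ := Finset.mem_filter.1 hjm
      exact hdk (hjd.trans (Nat.mem_properDivisors.1 hjp).1)
end

section
/- For every positive integer k and every positive integer j, (−1)^k Σ_{d ∣ j} Σ_{r=k}^{Ω(j/d)} (−1)^r α_r(j/d) = α_k(j), where the outer sum is over all positive divisors d of j. -/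
/-- `Omega m` is the number of prime factors of `m` counted with multiplicity;
note `alpha r m = 0` for `r > Omega m`. -/
def Omega (m : ℕ) : ℕ := m.primeFactorsList.length

instance alphaFinite (k m : ℕ) :
    Finite {f : Fin k → ℕ // (∀ i, 2 ≤ f i) ∧ ∏ i, f i = m} := by
  have hsub : {f : Fin k → ℕ | (∀ i, 2 ≤ f i) ∧ ∏ i, f i = m} ⊆
      Set.univ.pi (fun _ : Fin k => Set.Iic m) := by
    rintro f ⟨h1, h2⟩ i -
    have hdvd : f i ∣ m := h2 ▸ Finset.dvd_prod_of_mem f (Finset.mem_univ i)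
    rcases Nat.eq_zero_or_pos m with hm | hm
    · exfalso
      subst hm
      obtain ⟨a, -, ha⟩ := Finset.prod_eq_zero_iff.mp h2
      have := h1 a; omega
    · exact Nat.le_of_dvd hm hdvd
  exact ((Set.Finite.pi fun _ => Set.finite_Iic m).subset hsub).to_subtype

lemma Omega_eq (m : ℕ) : Omega m = ArithmeticFunction.cardFactors m :=
  ArithmeticFunction.cardFactors_apply.symm

lemma Omega_mul {a b : ℕ} (ha : a ≠ 0) (hb : b ≠ 0) :
    Omega (a * b) = Omega a + Omega b := by
  simp only [Omega_eq]; exact ArithmeticFunction.cardFactors_mul ha hb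

lemma Omega_pos {m : ℕ} (hm : 2 ≤ m) : 1 ≤ Omega m := by
  obtain ⟨p, hp, hpd⟩ := Nat.exists_prime_and_dvd (by omega : m ≠ 1)
  have : p ∈ m.primeFactorsList := (Nat.mem_primeFactorsList (by omega)).mpr ⟨hp, hpd⟩
  have := List.length_pos_iff.mpr (List.ne_nil_of_mem this)
  simpa [Omega, Nat.one_le_iff_ne_zero, Nat.pos_iff_ne_zero] using this

lemma Omega_prod {ι : Type*} (s : Finset ι) (f : ι → ℕ) (h : ∀ i ∈ s, f i ≠ 0) :
    Omega (∏ i ∈ s, f i) = ∑ i ∈ s, Omega (f i) := by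
  classical
  induction s using Finset.induction with
  | empty => simp [Omega]
  | @insert a s ha ih =>
    rw [Finset.prod_insert ha, Finset.sum_insert ha,
      Omega_mul (h a (Finset.mem_insert_self a s))
        (Finset.prod_ne_zero_iff.mpr fun i hi => h i (Finset.mem_insert_of_mem hi)),
      ih fun i hi => h i (Finset.mem_insert_of_mem hi)]

lemma alpha_eq_zero {r m : ℕ} (hm : m ≠ 0) (h : Omega m < r) : alpha r m = 0 := by
  have : IsEmpty {f : Fin r → ℕ // (∀ i, 2 ≤ f i) ∧ ∏ i, f i = m} := by
    constructor
    rintro ⟨f, h1, h2⟩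
    have hO : Omega m = ∑ i : Fin r, Omega (f i) := by
      rw [← h2, Omega_prod]
      intro i _; have := h1 i; omega
    have hr : r ≤ Omega m := by
      rw [hO]
      calc r = ∑ _i : Fin r, 1 := by simp
        _ ≤ ∑ i : Fin r, Omega (f i) :=
          Finset.sum_le_sum fun i _ => Omega_pos (h1 i)
    omega
  exact Nat.card_of_isEmpty

lemma alpha_step (r j : ℕ) (hj : j ≠ 0) :
    ∑ d ∈ j.divisors.filter (fun d => d ≠ 1), alpha r (j / d) = alpha (r + 1) j := by
  classical
  set s := j.divisors.filter (fun d => d ≠ 1) with hs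
  -- Fintype instances
  letI : ∀ m, Fintype {f : Fin r → ℕ // (∀ i, 2 ≤ f i) ∧ ∏ i, f i = m} :=
    fun m => Fintype.ofFinite _
  have hcard : ∑ d ∈ s, alpha r (j / d) =
      Nat.card (Σ d : {d : ℕ // d ∈ s},
        {f : Fin r → ℕ // (∀ i, 2 ≤ f i) ∧ ∏ i, f i = j / (d : ℕ)}) := by
    rw [Nat.card_eq_fintype_card, Fintype.card_sigma,
      ← Finset.sum_coe_sort s (fun d => alpha r (j / d))]
    refine Finset.sum_congr rfl fun d _ => ?_
    rw [alpha, Nat.card_eq_fintype_card]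
  rw [hcard, alpha]
  refine Nat.card_congr (Equiv.ofBijective
    (fun x => ⟨Fin.cons x.1.1 x.2.1, by
      have hd := x.1.2
      simp only [hs, Finset.mem_filter, Nat.mem_divisors] at hd
      intro i
      rcases Fin.eq_zero_or_eq_succ i with rfl | ⟨i', rfl⟩
      · simp only [Fin.cons_zero]
        have h0 : x.1.1 ≠ 0 := fun h => hd.1.2 (Nat.eq_zero_of_zero_dvd (h ▸ hd.1.1))
        exact (Nat.two_le_iff _).mpr ⟨h0, hd.2⟩
      · simpa using x.2.2.1 i', by
      have hd := x.1.2
      simp only [hs, Finset.mem_filter, Nat.mem_divisors] at hd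
      rw [Fin.prod_univ_succ]
      simp only [Fin.cons_zero, Fin.cons_succ]
      have := x.2.2.2
      rw [this]
      exact Nat.mul_div_cancel' hd.1.1⟩) ⟨?_, ?_⟩)
  · -- injective
    rintro ⟨⟨d, hd⟩, f, hf⟩ ⟨⟨d', hd'⟩, f', hf'⟩ h
    have hval := congrArg Subtype.val h
    have h0 : d = d' := by simpa using congrFun hval 0
    subst h0
    have htail : f = f' := by
      funext i
      simpa using congrFun hval i.succ
    subst htail
    rfl
  · -- surjective
    rintro ⟨g, hg1, hg2⟩
    have hg0 : 2 ≤ g 0 := hg1 0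
    have hprod : g 0 * ∏ i : Fin r, g i.succ = j := by
      rw [← Fin.prod_univ_succ]; exact hg2
    have hdvd : g 0 ∣ j := ⟨∏ i : Fin r, g i.succ, hprod.symm⟩
    have hmem : g 0 ∈ s := by
      simp only [hs, Finset.mem_filter, Nat.mem_divisors]
      exact ⟨⟨hdvd, hj⟩, ((Nat.two_le_iff _).mp hg0).2⟩
    refine ⟨⟨⟨g 0, hmem⟩, ⟨Fin.tail g, fun i => hg1 i.succ, ?_⟩⟩, ?_⟩
    · have : (∏ i : Fin r, g i.succ) = j / g 0 := by
        rw [← hprod, Nat.mul_div_cancel_left _ (Nat.lt_of_lt_of_le Nat.zero_lt_two hg0)]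
      simpa [Fin.tail] using this
    · apply Subtype.ext
      simpa using Fin.cons_self_tail g
  
lemma alpha_rec (r j : ℕ) (hj : j ≠ 0) :
    ∑ d ∈ j.divisors, alpha r (j / d) = alpha r j + alpha (r + 1) j := by
  classical
  have h1 : (1 : ℕ) ∈ j.divisors := Nat.one_mem_divisors.mpr hj
  rw [← Finset.add_sum_erase _ _ h1, Nat.div_one, ← Finset.filter_ne' j.divisors 1,
    alpha_step r j hj]

lemma telescope (b : ℕ → ℤ) (k N : ℕ) (h : k ≤ N + 1) :
    ∑ r ∈ Finset.Icc k N, (b r - b (r + 1)) = b k - b (N + 1) := by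
  induction N with
  | zero =>
    interval_cases k
    · simp
    · simp
  | succ n ih =>
    rcases Nat.lt_or_ge k (n + 2) with hk | hk
    · have hkn : k ≤ n + 1 := by omega
      rw [Finset.sum_Icc_succ_top hkn, ih hkn]
      ring
    · have : k = n + 2 := by omega
      subst this
      rw [Finset.Icc_eq_empty (by omega)]
      simp

theorem stmt9 (k j : ℕ) (hk : 0 < k) (hj : 0 < j) :
    (-1 : ℤ) ^ k *
        ∑ d ∈ j.divisors, ∑ r ∈ Finset.Icc k (Omega (j / d)),
          (-1 : ℤ) ^ r * (alpha r (j / d) : ℤ)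
      = (alpha k j : ℤ) := by
  classical
  have hj' : j ≠ 0 := hj.ne'
  set N := max (Omega j) k with hN
  -- extend inner sums
  have hext : ∀ d ∈ j.divisors,
      ∑ r ∈ Finset.Icc k (Omega (j / d)), (-1 : ℤ) ^ r * (alpha r (j / d) : ℤ)
        = ∑ r ∈ Finset.Icc k N, (-1 : ℤ) ^ r * (alpha r (j / d) : ℤ) := by
    intro d hd
    rw [Nat.mem_divisors] at hd
    have hd0 : d ≠ 0 := by rintro rfl; exact hj' (Nat.eq_zero_of_zero_dvd hd.1)
    have hq0 : j / d ≠ 0 :=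
      Nat.div_ne_zero_iff.mpr ⟨hd0, Nat.le_of_dvd hj hd.1⟩
    have hOle : Omega (j / d) ≤ N := by
      have : j = d * (j / d) := (Nat.mul_div_cancel' hd.1).symm
      have hO : Omega j = Omega d + Omega (j / d) := by
        conv_lhs => rw [this]
        exact Omega_mul hd0 hq0
      omega
    refine Finset.sum_subset (Finset.Icc_subset_Icc_right hOle) ?_
    intro r hr hr'
    simp only [Finset.mem_Icc] at hr hr'
    have : Omega (j / d) < r := by omega
    rw [alpha_eq_zero hq0 this]
    simp
  rw [Finset.sum_congr rfl hext, Finset.sum_comm]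
  have hswap : ∀ r, ∑ d ∈ j.divisors, (-1 : ℤ) ^ r * (alpha r (j / d) : ℤ)
      = (-1 : ℤ) ^ r * (alpha r j : ℤ) - (-1 : ℤ) ^ (r + 1) * (alpha (r + 1) j : ℤ) := by
    intro r
    rw [← Finset.mul_sum, ← Nat.cast_sum, alpha_rec r j hj']
    push_cast
    ring
  rw [Finset.sum_congr rfl fun r _ => hswap r]
  rw [telescope (fun r => (-1 : ℤ) ^ r * (alpha r j : ℤ)) k N (by omega)]
  have hzero : alpha (N + 1) j = 0 :=
    alpha_eq_zero hj' (by omega)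
  rw [hzero]
  have : ((-1 : ℤ) ^ k) * ((-1 : ℤ) ^ k) = 1 := by
    rw [← pow_add]
    exact Even.neg_one_pow ⟨k, rfl⟩
  push_cast
  rw [mul_sub]
  rw [← mul_assoc, this]
  ring
end

section
/- Let g ∈ ℂ[[t]] satisfy g² + g = t with zero constant term, and let u ∈ ℂ[[t]] satisfy u² = t² + 4t + 1 with constant term 1 (u is then a unit). In M₂(ℂ[[t]]) set S = [[0,−1],[1,0]], R = [[g, 1+t],[−1, −1−g]], and W = u^{-1}·[[−t, 2g+1],[2g+1, t]]. Then: (i) W² = I; (ii) W·S·W = S^{-1} = −S; (iii) W·R·W = R^{-1} = −I − R; (iv) the constant term of W is [[0,1],[1,0]]. Moreover W is the unique element of GL(2, ℂ[[t]]) satisfying (i)–(iv), up to the sign ambiguity: any V ∈ GL(2, ℂ[[t]]) satisfying (i), (ii), (iii) and having constant term [[0,1],[1,0]] equals W. -/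
open PowerSeries

set_option maxHeartbeats 1000000 in

theorem stmt15 (g u : PowerSeries ℂ)
    (hg : g ^ 2 + g = PowerSeries.X)
    (hg0 : PowerSeries.constantCoeff (R := ℂ) g = 0)
    (hu : u ^ 2 = PowerSeries.X ^ 2 + 4 * PowerSeries.X + 1)
    (hu0 : PowerSeries.constantCoeff (R := ℂ) u = 1) :
    let S : Matrix (Fin 2) (Fin 2) (PowerSeries ℂ) := !![0, -1; 1, 0]
    let R : Matrix (Fin 2) (Fin 2) (PowerSeries ℂ) :=
      !![g, 1 + PowerSeries.X; -1, -1 - g]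
    let W : Matrix (Fin 2) (Fin 2) (PowerSeries ℂ) :=
      u⁻¹ • !![-PowerSeries.X, 2 * g + 1; 2 * g + 1, PowerSeries.X]
    -- (i)–(iv)
    W ^ 2 = 1 ∧
    (W * S * W = S⁻¹ ∧ S⁻¹ = -S) ∧
    (W * R * W = R⁻¹ ∧ R⁻¹ = -1 - R) ∧
    W.map (PowerSeries.constantCoeff (R := ℂ)) = !![0, 1; 1, 0] ∧
    -- uniqueness: any invertible V satisfying (i)–(iv) equals W
    (∀ V : Matrix (Fin 2) (Fin 2) (PowerSeries ℂ), IsUnit V →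
      V ^ 2 = 1 → V * S * V = S⁻¹ → V * R * V = R⁻¹ →
      V.map (PowerSeries.constantCoeff (R := ℂ)) = !![0, 1; 1, 0] → V = W) := by
  intro S R W
  have huu : u⁻¹ * u = 1 := PowerSeries.inv_mul_cancel u (by rw [hu0]; exact one_ne_zero)
  set A : Matrix (Fin 2) (Fin 2) (PowerSeries ℂ) :=
    !![-PowerSeries.X, 2 * g + 1; 2 * g + 1, PowerSeries.X] with hAdef
  have hWA : W = u⁻¹ • A := rfl
  -- A * A = (u*u) • 1
  have hAA : A * A = (u * u) • (1 : Matrix (Fin 2) (Fin 2) (PowerSeries ℂ)) := by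
    rw [← Matrix.ext_iff]; intro i j
    fin_cases i <;> fin_cases j
    · simp [hAdef, Matrix.mul_apply, Fin.sum_univ_two, Matrix.one_apply, smul_eq_mul]
      linear_combination (4 : PowerSeries ℂ) * hg - hu
    · simp [hAdef, Matrix.mul_apply, Fin.sum_univ_two, Matrix.one_apply, smul_eq_mul]
      ring
    · simp [hAdef, Matrix.mul_apply, Fin.sum_univ_two, Matrix.one_apply, smul_eq_mul]
      ring
    · simp [hAdef, Matrix.mul_apply, Fin.sum_univ_two, Matrix.one_apply, smul_eq_mul]
      linear_combination (4 : PowerSeries ℂ) * hg - hu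
  -- A * S * A = (u*u) • (-S)
  have hASA : A * S * A = (u * u) • (-S) := by
    show A * !![(0:PowerSeries ℂ), -1; 1, 0] * A =
      (u * u) • (-(!![(0:PowerSeries ℂ), -1; 1, 0]))
    rw [← Matrix.ext_iff]; intro i j
    fin_cases i <;> fin_cases j
    · simp [hAdef, Matrix.mul_apply, Fin.sum_univ_two, smul_eq_mul, Matrix.neg_apply]
      ring
    · simp [hAdef, Matrix.mul_apply, Fin.sum_univ_two, smul_eq_mul, Matrix.neg_apply]
      linear_combination (4 : PowerSeries ℂ) * hg - hu
    · simp [hAdef, Matrix.mul_apply, Fin.sum_univ_two, smul_eq_mul, Matrix.neg_apply]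
      linear_combination (-4 : PowerSeries ℂ) * hg + hu
    · simp [hAdef, Matrix.mul_apply, Fin.sum_univ_two, smul_eq_mul, Matrix.neg_apply]
      ring
  -- A * R * A = (u*u) • (-1 - R)
  have hARA : A * R * A = (u * u) • (-1 - R) := by
    show A * !![g, 1 + PowerSeries.X; -1, -1 - g] * A =
      (u * u) • (-1 - !![g, 1 + PowerSeries.X; -1, -1 - g])
    rw [← Matrix.ext_iff]; intro i j
    fin_cases i <;> fin_cases j
    · simp [hAdef, Matrix.mul_apply, Fin.sum_univ_two, smul_eq_mul, Matrix.one_apply,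
        Matrix.sub_apply, Matrix.neg_apply]
      linear_combination (-4 - 4*g) * hg + (1 + g) * hu
    · simp [hAdef, Matrix.mul_apply, Fin.sum_univ_two, smul_eq_mul, Matrix.one_apply,
        Matrix.sub_apply, Matrix.neg_apply]
      linear_combination (-4 - 4*PowerSeries.X) * hg + (1 + PowerSeries.X) * hu
    · simp [hAdef, Matrix.mul_apply, Fin.sum_univ_two, smul_eq_mul, Matrix.one_apply,
        Matrix.sub_apply, Matrix.neg_apply]
      linear_combination (4 : PowerSeries ℂ) * hg - hu
    · simp [hAdef, Matrix.mul_apply, Fin.sum_univ_two, smul_eq_mul, Matrix.one_apply,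
        Matrix.sub_apply, Matrix.neg_apply]
      linear_combination (4*g) * hg - g * hu
  have hsc : u⁻¹ * u⁻¹ * (u * u) = 1 := by linear_combination (u⁻¹ * u + 1) * huu
  have hWW : W * W = 1 := by
    rw [hWA, Matrix.smul_mul, Matrix.mul_smul, smul_smul, hAA, smul_smul, hsc, one_smul]
  have hW2 : W ^ 2 = 1 := by rw [pow_two]; exact hWW
  have hWSW : W * S * W = -S := by
    rw [hWA, Matrix.smul_mul, Matrix.smul_mul, Matrix.mul_smul, smul_smul, hASA, smul_smul,
      hsc, one_smul]
  have hWRW : W * R * W = -1 - R := by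
    rw [hWA, Matrix.smul_mul, Matrix.smul_mul, Matrix.mul_smul, smul_smul, hARA, smul_smul,
      hsc, one_smul]
  have hSinv : S⁻¹ = -S := by
    apply Matrix.inv_eq_right_inv
    show (!![(0:PowerSeries ℂ), -1; 1, 0]) * -(!![(0:PowerSeries ℂ), -1; 1, 0]) = 1
    rw [← Matrix.ext_iff]; intro i j
    fin_cases i <;> fin_cases j <;>
      simp [Matrix.mul_apply, Fin.sum_univ_two, Matrix.one_apply, Matrix.neg_apply]
  have hRinv : R⁻¹ = -1 - R := by
    apply Matrix.inv_eq_right_inv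
    show (!![g, 1 + PowerSeries.X; -1, -1 - g]) * (-1 - !![g, 1 + PowerSeries.X; -1, -1 - g]) = 1
    rw [← Matrix.ext_iff]; intro i j
    fin_cases i <;> fin_cases j
    · simp [Matrix.mul_apply, Fin.sum_univ_two, Matrix.one_apply, Matrix.neg_apply,
        Matrix.sub_apply]
      linear_combination -hg
    · simp [Matrix.mul_apply, Fin.sum_univ_two, Matrix.one_apply, Matrix.neg_apply,
        Matrix.sub_apply]
      ring
    · simp [Matrix.mul_apply, Fin.sum_univ_two, Matrix.one_apply, Matrix.neg_apply,
        Matrix.sub_apply]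
      ring
    · simp [Matrix.mul_apply, Fin.sum_univ_two, Matrix.one_apply, Matrix.neg_apply,
        Matrix.sub_apply]
      linear_combination -hg
  have hu0' : PowerSeries.constantCoeff (R := ℂ) u⁻¹ = 1 := by
    rw [PowerSeries.constantCoeff_inv, hu0, inv_one]
  have hWmap : W.map (PowerSeries.constantCoeff (R := ℂ)) = !![0, 1; 1, 0] := by
    rw [← Matrix.ext_iff]; intro i j
    fin_cases i <;> fin_cases j <;>
      simp [hWA, hAdef, Matrix.map_apply, Matrix.smul_apply, smul_eq_mul, map_mul, hu0', hg0]
  refine ⟨hW2, ⟨by rw [hSinv]; exact hWSW, hSinv⟩, ⟨by rw [hRinv]; exact hWRW, hRinv⟩, hWmap, ?_⟩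
  intro V _ hV2 hVSV hVRV hVmap
  rw [hSinv] at hVSV
  rw [hRinv] at hVRV
  have hVV : V * V = 1 := by rw [← pow_two]; exact hV2
  set D : Matrix (Fin 2) (Fin 2) (PowerSeries ℂ) := W * V with hDdef
  have hVS : V * S = -S * V := by
    calc V * S = V * S * (V * V) := by rw [hVV, mul_one]
    _ = (V * S * V) * V := by rw [← mul_assoc]
    _ = -S * V := by rw [hVSV]
  have hWS : W * S = -S * W := by
    calc W * S = W * S * (W * W) := by rw [hWW, mul_one]
    _ = (W * S * W) * W := by rw [← mul_assoc]
    _ = -S * W := by rw [hWSW]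
  have hVR : V * R = (-1 - R) * V := by
    calc V * R = V * R * (V * V) := by rw [hVV, mul_one]
    _ = (V * R * V) * V := by rw [← mul_assoc]
    _ = (-1 - R) * V := by rw [hVRV]
  have hWR : W * R = (-1 - R) * W := by
    calc W * R = W * R * (W * W) := by rw [hWW, mul_one]
    _ = (W * R * W) * W := by rw [← mul_assoc]
    _ = (-1 - R) * W := by rw [hWRW]
  have hDS : D * S = S * D := by
    calc D * S = W * (V * S) := by rw [hDdef, mul_assoc]
    _ = W * (-S * V) := by rw [hVS]
    _ = (W * (-S)) * V := by rw [mul_assoc]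
    _ = (-(W * S)) * V := by rw [mul_neg]
    _ = (-(-S * W)) * V := by rw [hWS]
    _ = (S * W) * V := by noncomm_ring
    _ = S * D := by rw [hDdef, mul_assoc]
  have hVR' : V * R = -V - R * V := by rw [hVR]; noncomm_ring
  have hRV : R * V = -V - V * R := by rw [hVR']; noncomm_ring
  have hWR' : W * R = -W - R * W := by rw [hWR]; noncomm_ring
  have hRW : R * W = -W - W * R := by rw [hWR']; noncomm_ring
  have hDR : D * R = R * D := by
    have key : R * (W * V) = (W * V) * R := by
      calc R * (W * V) = (R * W) * V := by rw [mul_assoc]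
      _ = (-W - W * R) * V := by rw [hRW]
      _ = -(W * V) - W * (R * V) := by noncomm_ring
      _ = -(W * V) - W * (-V - V * R) := by rw [hRV]
      _ = (W * V) * R := by noncomm_ring
    rw [hDdef]; exact key.symm
  -- extract entries of D
  have e00 := congrFun (congrFun hDS 0) 0
  have e01 := congrFun (congrFun hDS 0) 1
  have f00 := congrFun (congrFun hDR 0) 0
  simp [Matrix.mul_apply, Fin.sum_univ_two, S, R] at e00 e01 f00
  -- e00 : D 0 1 = -D 1 0, e01 : D 0 0 = D 1 1,
  -- f00 : D 0 0 * g + -D 0 1 = g * D 0 0 + (1 + X) * D 1 0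
  have hb : D 0 1 = 0 := by
    have h : PowerSeries.X * D 0 1 = 0 := by
      linear_combination f00 + (1 + PowerSeries.X) * e00
    rcases mul_eq_zero.mp h with h' | h'
    · exact absurd h' PowerSeries.X_ne_zero
    · exact h'
  have hc : D 1 0 = 0 := by linear_combination e00 - hb
  set a : PowerSeries ℂ := D 0 0 with hadef
  have hD : D = a • (1 : Matrix (Fin 2) (Fin 2) (PowerSeries ℂ)) := by
    rw [← Matrix.ext_iff]; intro i j
    fin_cases i <;> fin_cases j <;>
      simp [Matrix.smul_apply, Matrix.one_apply, hb, hc, ← e01] <;> rfl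
  have hVW : V = a • W := by
    have h1 : V = W * D := by rw [hDdef, ← mul_assoc, hWW, one_mul]
    rw [h1, hD, Matrix.mul_smul, mul_one]
  have haa : a * a = 1 := by
    have h2 : (a • W) * (a • W) = 1 := by rw [← hVW]; exact hVV
    rw [Matrix.smul_mul, Matrix.mul_smul, smul_smul, hWW] at h2
    have h3 := congrFun (congrFun h2 0) 0
    simpa [Matrix.smul_apply, Matrix.one_apply] using h3
  have hca : PowerSeries.constantCoeff (R := ℂ) a = 1 := by
    have h4 := congrFun (congrFun hVmap 0) 1
    have h5 := congrFun (congrFun hWmap 0) 1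
    have h6 : V 0 1 = a * W 0 1 := by
      rw [hVW]; simp [Matrix.smul_apply, smul_eq_mul]
    simp [Matrix.map_apply] at h4 h5
    rw [h6, map_mul, h5, mul_one] at h4
    exact h4
  have ha1 : a = 1 := by
    have h7 : (a - 1) * (a + 1) = 0 := by linear_combination haa
    rcases mul_eq_zero.mp h7 with h' | h'
    · exact sub_eq_zero.mp h'
    · exfalso
      have h8 : a = -1 := by linear_combination h'
      rw [h8] at hca
      norm_num [map_neg, map_one] at hca
  rw [hVW, ha1, one_smul]
end
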